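/- (Signal–noise separation example.) Let d ≥ 1, let v ∈ ℝ^d be a unit vector, and let σ ∈ (0,1]. Let s be uniform on {v, −v}, let n ∼ N(0, σ²·I_d) be independent of s, and set x := s + n. Then the covariance of x is Σ := E[xxᵀ] = vvᵀ + σ²·I_d, with top eigenvalue λ₁ = 1+σ², top eigenvector v, and second eigenvalue λ₂ = σ². Moreover, there exists a universal constant C > 0 such that ‖E[(xxᵀ−Σ)(xxᵀ−Σ)ᵀ]‖₂ ≤ C·d·σ², and for every unit vector u ∈ ℝ^d, ‖E[(xxᵀ−Σ)uuᵀ(xxᵀ−Σ)ᵀ]‖₂ ≤ C·σ². -/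

import Mathlib

open MeasureTheory ProbabilityTheory Real Matrix
open scoped ENNReal NNReal Classical

noncomputable section

/-- Euclidean vectors in `ℝ^d`. -/
abbrev Vec (d : ℕ) : Type := EuclideanSpace ℝ (Fin d)

/-- `d × d` real matrices. -/
abbrev Mat (d : ℕ) : Type := Matrix (Fin d) (Fin d) ℝ

instance matMeasurableSpace {d : ℕ} : MeasurableSpace (Mat d) := MeasurableSpace.pi

/-- The spectral (ℓ₂-operator) norm of a matrix. -/
noncomputable def specNorm {d : ℕ} (A : Mat d) : ℝ :=
  ‖Matrix.toEuclideanCLM (𝕜 := ℝ) A‖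

/-- Matrix-vector multiplication, as a map on Euclidean space. -/
noncomputable def mulVecE {d : ℕ} (A : Mat d) (u : Vec d) : Vec d :=
  Matrix.toEuclideanCLM (𝕜 := ℝ) A u

/-- Reinterpret a Euclidean vector as a plain function. -/
def toVec' {d : ℕ} (u : Vec d) : Fin d → ℝ := u

/-- Real inner product on `ℝ^d`. -/
noncomputable def iprod {d : ℕ} (u v : Vec d) : ℝ := @inner ℝ _ _ u v

/-- Outer product `u vᵀ`. -/
def outer {d : ℕ} (u v : Vec d) : Mat d :=
  Matrix.vecMulVec (toVec' u) (toVec' v)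

/-- Entrywise expectation of a random matrix. -/
noncomputable def matExp {Ω : Type*} [MeasurableSpace Ω] {d : ℕ} (μ : Measure Ω)
    (A : Ω → Mat d) : Mat d :=
  Matrix.of fun i j => ∫ ω, A ω i j ∂μ

/-- The matrix `H_u = lam1⁻² E[(A-Σ) u uᵀ (A-Σ)ᵀ]` of Assumption A.4. -/
noncomputable def Hmat {Ω : Type*} [MeasurableSpace Ω] {d : ℕ} (μ : Measure Ω)
    (A : Ω → Mat d) (Sm : Mat d) (lam1 : ℝ) (u : Vec d) : Mat d :=
  (lam1 ^ 2)⁻¹ • matExp μ fun ω => (A ω - Sm) * outer u u * (A ω - Sm)ᵀ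

/-- `sin²` of the angle between two (nonzero) vectors. -/
noncomputable def sinSq {d : ℕ} (u v : Vec d) : ℝ :=
  1 - iprod u (v) ^ 2 / (‖u‖ ^ 2 * ‖v‖ ^ 2)

/-- `sin` of the angle between two unit vectors. -/
noncomputable def sinU {d : ℕ} (u v : Vec d) : ℝ :=
  Real.sqrt (1 - iprod u (v) ^ 2)

/-- Standard Gaussian measure on `ℝ^d` (as Euclidean space). -/
noncomputable def stdGaussianE (d : ℕ) : Measure (Vec d) :=
  (Measure.pi fun _ : Fin d => gaussianReal 0 1).map (EuclideanSpace.equiv (Fin d) ℝ).symm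

/-- `P` is the centered Gaussian measure with covariance matrix `S`, characterized through its
one-dimensional projections (Cramér–Wold). -/
def IsGaussianMeasure {d : ℕ} (P : Measure (Vec d)) (S : Mat d) : Prop :=
  IsProbabilityMeasure P ∧
    ∀ u : Vec d, P.map (fun x => iprod u (x)) = gaussianReal 0 (iprod u (mulVecE S u)).toNNReal

/-- Two datasets are neighboring if they differ in at most one entry. -/
def Neighboring {n : ℕ} {X : Type*} (S S' : Fin n → X) : Prop :=
  ∃ i₀, ∀ i, i ≠ i₀ → S i = S' i

/-- `(ε,δ)`-differential privacy of a randomized estimator mapping `n` points of `ℝ^d`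
to the unit sphere. -/
def DiffPrivate {n d : ℕ} (M : Kernel (Fin n → Vec d) (Metric.sphere (0 : Vec d) 1))
    (ε δ : ℝ) : Prop :=
  ∀ S S' : Fin n → Vec d, Neighboring S S' →
    ∀ B : Set (Metric.sphere (0 : Vec d) 1), MeasurableSet B →
      M S B ≤ ENNReal.ofReal (Real.exp ε) * M S' B + ENNReal.ofReal δ

/-- Clipping to norm at most `β`. -/
noncomputable def clipV {d : ℕ} (β : ℝ) (x : Vec d) : Vec d :=
  haveI := Classical.propDecidable (x = 0)
  if x = 0 then 0 else (min 1 (β / ‖x‖)) • x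

/-- Covariance (second-moment) matrix of a measure on `ℝ^d`. -/
noncomputable def covMatrix {d : ℕ} (P : Measure (Vec d)) : Mat d :=
  Matrix.of fun i j => ∫ x, toVec' x i * toVec' x j ∂P

end


set_option synthInstance.maxHeartbeats 1000000
set_option maxHeartbeats 1000000

noncomputable section
namespace S17


lemma integral_gaussianReal_eq (μ : ℝ) {v : ℝ≥0} (hv : v ≠ 0) (g : ℝ → ℝ) :
    ∫ x, g x ∂(gaussianReal μ v) = ∫ x, gaussianPDFReal μ v x * g x := by
  rw [gaussianReal_of_var_ne_zero μ hv]
  have h1 : (volume : Measure ℝ).withDensity (gaussianPDF μ v)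
      = (volume : Measure ℝ).withDensity (fun x => ((gaussianPDFReal μ v x).toNNReal : ℝ≥0∞)) := rfl
  rw [h1, integral_withDensity_eq_integral_smul ((measurable_gaussianPDFReal μ v).real_toNNReal)]
  congr 1
  ext x
  rw [NNReal.smul_def, smul_eq_mul, Real.coe_toNNReal _ (gaussianPDFReal_nonneg _ _ _)]

lemma pdf01 (x : ℝ) : gaussianPDFReal 0 1 x = (√(2 * π))⁻¹ * Real.exp (-(1/2 : ℝ) * x ^ 2) := by
  simp only [gaussianPDFReal, NNReal.coe_one, mul_one, sub_zero]
  congr 1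
  ring

lemma integrable_pow_gauss (n : ℕ) : Integrable (fun x : ℝ => x ^ n) (gaussianReal 0 1) := by
  have h1 : gaussianReal 0 1 = (volume : Measure ℝ).withDensity
      (fun x => ((gaussianPDFReal 0 1 x).toNNReal : ℝ≥0∞)) := by
    rw [gaussianReal_of_var_ne_zero 0 one_ne_zero]; rfl
  rw [h1, integrable_withDensity_iff_integrable_smul
    ((measurable_gaussianPDFReal 0 1).real_toNNReal)]
  have hbound : Integrable (fun x : ℝ =>
      |(√(2 * π))⁻¹ * (x ^ (n : ℝ) * Real.exp (-(1/2 : ℝ) * x ^ 2))|) volume :=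
    ((integrable_rpow_mul_exp_neg_mul_sq (b := 1/2) (by norm_num)
      (lt_of_lt_of_le (by norm_num : (-1:ℝ) < 0) (Nat.cast_nonneg n))).const_mul
      ((√(2 * π))⁻¹)).abs
  refine hbound.mono' ?_ ?_
  · exact (((measurable_gaussianPDFReal 0 1).real_toNNReal.coe_nnreal_real).mul
      (measurable_id.pow_const n)).aestronglyMeasurable
  · filter_upwards with x
    have hpdf : ((gaussianPDFReal 0 1 x).toNNReal : ℝ) = gaussianPDFReal 0 1 x :=
      Real.coe_toNNReal _ (gaussianPDFReal_nonneg _ _ _)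
    rw [NNReal.smul_def, smul_eq_mul, Real.norm_eq_abs, abs_mul, abs_pow, hpdf,
      abs_of_nonneg (gaussianPDFReal_nonneg 0 1 x), pdf01, Real.rpow_natCast,
      abs_mul, abs_mul, abs_pow,
      abs_of_nonneg (by positivity : (0:ℝ) ≤ (√(2 * π))⁻¹),
      abs_of_nonneg (Real.exp_nonneg _)]
    exact le_of_eq (by ring)

def M (n : ℕ) : ℝ := ∫ x, x ^ n ∂(gaussianReal 0 1)

lemma M_zero : M 0 = 1 := by simp [M]

lemma M_odd {n : ℕ} (hn : Odd n) : M n = 0 := by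
  have hmap : (gaussianReal 0 1).map (fun x : ℝ => -1 * x) = gaussianReal 0 1 := by
    have := gaussianReal_map_const_mul (μ := 0) (v := 1) (-1)
    simpa using this
  have h1 : M n = ∫ x, (-1 * x) ^ n ∂(gaussianReal 0 1) := by
    conv_lhs => rw [M, ← hmap, integral_map (by fun_prop) (by fun_prop)]
  have h2 : ∫ x, (-1 * x) ^ n ∂(gaussianReal 0 1) = - M n := by
    simp_rw [mul_pow, integral_const_mul, hn.neg_one_pow, M]
    ring
  have := h1.trans h2
  linarith

lemma M_even_val (n : ℕ) :
    M (2 * n) = (√(2 * π))⁻¹ * (2 * ((1/2 : ℝ) ^ (-((2 * (n:ℝ) + 1)) / 2) * (1 / 2) *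
      Real.Gamma ((2 * (n:ℝ) + 1) / 2))) := by
  rw [M, integral_gaussianReal_eq 0 one_ne_zero]
  simp_rw [pdf01, mul_assoc]
  rw [integral_const_mul]
  congr 1
  have heq : (fun x : ℝ => Real.exp (-(1/2:ℝ) * x ^ 2) * x ^ (2*n)) = fun x =>
      (fun t : ℝ => t ^ ((2*n : ℕ) : ℝ) * Real.exp (-(1/2:ℝ) * t ^ (2:ℝ))) |x| := by
    funext x
    simp only [Real.rpow_natCast, Real.rpow_two]
    rw [pow_mul |x| 2 n, sq_abs, ← pow_mul]
    ring
  rw [heq, integral_comp_abs (f := fun t : ℝ => t ^ ((2*n : ℕ) : ℝ) * Real.exp (-(1/2:ℝ) * t ^ (2:ℝ)))]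
  congr 1
  have := integral_rpow_mul_exp_neg_mul_rpow (p := 2) (q := (2*n : ℕ)) (b := 1/2)
    (by norm_num) (lt_of_lt_of_le (by norm_num : (-1:ℝ) < 0) (Nat.cast_nonneg _)) (by norm_num)
  rw [this]
  push_cast
  ring_nf

lemma sqrt_two_pi : √(2 * π) = √2 * √π := Real.sqrt_mul (by norm_num) _

lemma half_rpow (y : ℝ) : ((1:ℝ)/2) ^ (-y) = (2:ℝ) ^ y := by
  rw [one_div, Real.inv_rpow (by norm_num), Real.rpow_neg (by norm_num), inv_inv]

lemma M_two : M 2 = 1 := by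
  have h := M_even_val 1
  norm_num at h
  rw [half_rpow] at h
  have h32 : Real.Gamma (3/2) = (1/2) * √π := by
    rw [show (3/2 : ℝ) = 1/2 + 1 by norm_num, Real.Gamma_add_one (by norm_num),
      Real.Gamma_one_half_eq]
  have h2 : (2:ℝ) ^ ((3:ℝ)/2) = 2 * √2 := by
    rw [show ((3:ℝ)/2) = 1 + 1/2 by norm_num, Real.rpow_add (by norm_num), Real.rpow_one,
      ← Real.sqrt_eq_rpow]
  rw [h, h32, h2]
  have hs2 : √2 > 0 := by positivity
  have hsp : √π > 0 := Real.sqrt_pos.mpr Real.pi_pos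
  field_simp

lemma M_four : M 4 = 3 := by
  have h := M_even_val 2
  norm_num at h
  rw [half_rpow] at h
  have h52 : Real.Gamma (5/2) = (3/2) * ((1/2) * √π) := by
    rw [show (5/2 : ℝ) = 3/2 + 1 by norm_num, Real.Gamma_add_one (by norm_num),
      show (3/2 : ℝ) = 1/2 + 1 by norm_num, Real.Gamma_add_one (by norm_num),
      Real.Gamma_one_half_eq]
  have h2 : (2:ℝ) ^ ((5:ℝ)/2) = 4 * √2 := by
    rw [show ((5:ℝ)/2) = 2 + 1/2 by norm_num, Real.rpow_add (by norm_num),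
      ← Real.sqrt_eq_rpow, Real.rpow_two]
    ring
  rw [h, h52, h2]
  have hs2 : √2 > 0 := by positivity
  have hsp : √π > 0 := Real.sqrt_pos.mpr Real.pi_pos
  field_simp
  ring

lemma M_one : M 1 = 0 := M_odd ⟨0, by norm_num⟩
lemma M_three : M 3 = 0 := M_odd ⟨1, by norm_num⟩


lemma M_def (n : ℕ) : M n = ∫ x, x ^ n ∂(gaussianReal 0 1) := rfl

/-- affine moments -/
def N (σ a : ℝ) (n : ℕ) : ℝ := ∫ x, (a + σ * x) ^ n ∂(gaussianReal 0 1)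

lemma aff_expand (σ a : ℝ) (n : ℕ) : (fun x : ℝ => (a + σ * x) ^ n) =
    fun x => ∑ k ∈ Finset.range (n+1), (a ^ k * σ ^ (n-k) * (n.choose k)) * x ^ (n-k) := by
  funext x
  rw [add_pow]
  refine Finset.sum_congr rfl fun k _ => ?_
  rw [mul_pow]
  ring

lemma intAff (σ a : ℝ) (n : ℕ) : Integrable (fun x : ℝ => (a + σ * x) ^ n) (gaussianReal 0 1) := by
  rw [aff_expand]
  exact integrable_finset_sum _ fun k _ => (integrable_pow_gauss (n-k)).const_mul _

lemma N_val (σ a : ℝ) (n : ℕ) : N σ a n =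
    ∑ k ∈ Finset.range (n+1), a ^ k * σ ^ (n-k) * (n.choose k) * M (n-k) := by
  rw [N, aff_expand, integral_finset_sum _ fun k _ => (integrable_pow_gauss (n-k)).const_mul _]
  exact Finset.sum_congr rfl fun k _ => by rw [integral_const_mul, M_def]

lemma N_zero (σ a : ℝ) : N σ a 0 = 1 := by
  simp [N_val, M_zero]

lemma N_one (σ a : ℝ) : N σ a 1 = a := by
  simp [N_val, Finset.sum_range_succ, M_zero, M_one]

lemma N_two (σ a : ℝ) : N σ a 2 = a^2 + σ^2 := by
  simp [N_val, Finset.sum_range_succ, M_zero, M_one, M_two]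
  ring

lemma N_three (σ a : ℝ) : N σ a 3 = a^3 + 3*σ^2*a := by
  simp [N_val, Finset.sum_range_succ, M_zero, M_one, M_two, M_three]
  ring

lemma N_four (σ a : ℝ) : N σ a 4 = a^4 + 6*σ^2*a^2 + 3*σ^4 := by
  simp [N_val, Finset.sum_range_succ, M_zero, M_one, M_two, M_three, M_four]
  norm_num [Nat.choose]
  ring

/-- product of standard gaussians -/
def GP (d : ℕ) : Measure (Fin d → ℝ) := Measure.pi fun _ => gaussianReal 0 1

instance (d : ℕ) : IsProbabilityMeasure (GP d) := by unfold GP; infer_instance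

variable {d : ℕ}

lemma pi_integrable (f : Fin d → ℝ → ℝ) (hf : ∀ t, Integrable (f t) (gaussianReal 0 1)) :
    Integrable (fun x : Fin d → ℝ => ∏ t, f t (x t)) (GP d) := by
  letI : MeasureSpace ℝ := ⟨gaussianReal 0 1⟩
  haveI : SigmaFinite (volume : Measure ℝ) := by
    change SigmaFinite (gaussianReal 0 1); infer_instance
  exact MeasureTheory.Integrable.fintype_prod (f := f) hf

lemma pi_integral (f : Fin d → ℝ → ℝ) :
    ∫ x, ∏ t, f t (x t) ∂(GP d) = ∏ t, ∫ y, f t y ∂(gaussianReal 0 1) := by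
  letI : MeasureSpace ℝ := ⟨gaussianReal 0 1⟩
  haveI : SigmaFinite (volume : Measure ℝ) := by
    change SigmaFinite (gaussianReal 0 1); infer_instance
  exact MeasureTheory.integral_fintype_prod_eq_prod f

/-- indicator exponent -/
def ee (i t : Fin d) : ℕ := if t = i then 1 else 0

/-- Kronecker delta -/
def dd (i j : Fin d) : ℝ := if i = j then 1 else 0

lemma single_prod (s : Fin d → ℝ) (σ : ℝ) (a : Fin d) (x : Fin d → ℝ) :
    ∏ t, (s t + σ * x t) ^ (ee a t) = s a + σ * x a := by
  have : ∀ t, (s t + σ * x t) ^ (ee a t) = if t = a then s t + σ * x t else 1 := by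
    intro t; unfold ee; split <;> simp
  rw [Finset.prod_congr rfl fun t _ => this t, Finset.prod_ite_eq' Finset.univ a]
  simp

lemma four_prod (s : Fin d → ℝ) (σ : ℝ) (i j k l : Fin d) (x : Fin d → ℝ) :
    (s i + σ * x i) * (s j + σ * x j) * (s k + σ * x k) * (s l + σ * x l)
      = ∏ t, (s t + σ * x t) ^ (ee i t + ee j t + ee k t + ee l t) := by
  simp_rw [pow_add, Finset.prod_mul_distrib, single_prod]

lemma two_prod (s : Fin d → ℝ) (σ : ℝ) (i j : Fin d) (x : Fin d → ℝ) :
    (s i + σ * x i) * (s j + σ * x j) = ∏ t, (s t + σ * x t) ^ (ee i t + ee j t) := by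
  simp_rw [pow_add, Finset.prod_mul_distrib, single_prod]

section prodN
variable (σ : ℝ) (s : Fin d → ℝ)

lemma prodN_one (a : Fin d) (p : ℕ) (m : Fin d → ℕ) (hm : ∀ t, m t = if t = a then p else 0) :
    ∏ t, N σ (s t) (m t) = N σ (s a) p := by
  have h : ∀ t, N σ (s t) (m t) = if t = a then N σ (s t) p else 1 := by
    intro t; rw [hm t]; split <;> simp [N_zero]
  rw [Finset.prod_congr rfl fun t _ => h t, Finset.prod_ite_eq' Finset.univ a]
  simp

lemma prodN_two (a b : Fin d) (hab : a ≠ b) (p q : ℕ) (m : Fin d → ℕ)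
    (hm : ∀ t, m t = (if t = a then p else 0) + (if t = b then q else 0)) :
    ∏ t, N σ (s t) (m t) = N σ (s a) p * N σ (s b) q := by
  have h : ∀ t, N σ (s t) (m t) =
      (if t = a then N σ (s t) p else 1) * (if t = b then N σ (s t) q else 1) := by
    intro t; rw [hm t]
    by_cases h1 : t = a <;> by_cases h2 : t = b <;> simp_all [N_zero]
  rw [Finset.prod_congr rfl fun t _ => h t, Finset.prod_mul_distrib,
    Finset.prod_ite_eq' Finset.univ a, Finset.prod_ite_eq' Finset.univ b]
  simp

lemma prodN_three (a b c : Fin d) (hab : a ≠ b) (hac : a ≠ c) (hbc : b ≠ c)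
    (p q r : ℕ) (m : Fin d → ℕ)
    (hm : ∀ t, m t = (if t = a then p else 0) + (if t = b then q else 0)
      + (if t = c then r else 0)) :
    ∏ t, N σ (s t) (m t) = N σ (s a) p * N σ (s b) q * N σ (s c) r := by
  have h : ∀ t, N σ (s t) (m t) =
      (if t = a then N σ (s t) p else 1) * (if t = b then N σ (s t) q else 1)
        * (if t = c then N σ (s t) r else 1) := by
    intro t; rw [hm t]
    by_cases h1 : t = a <;> by_cases h2 : t = b <;> by_cases h3 : t = c <;>
      simp_all [N_zero]
  rw [Finset.prod_congr rfl fun t _ => h t, Finset.prod_mul_distrib, Finset.prod_mul_distrib,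
    Finset.prod_ite_eq' Finset.univ a, Finset.prod_ite_eq' Finset.univ b,
    Finset.prod_ite_eq' Finset.univ c]
  simp

lemma prodN_four (a b c e : Fin d) (hab : a ≠ b) (hac : a ≠ c) (hae : a ≠ e)
    (hbc : b ≠ c) (hbe : b ≠ e) (hce : c ≠ e) (p q r w : ℕ) (m : Fin d → ℕ)
    (hm : ∀ t, m t = (if t = a then p else 0) + (if t = b then q else 0)
      + (if t = c then r else 0) + (if t = e then w else 0)) :
    ∏ t, N σ (s t) (m t) = N σ (s a) p * N σ (s b) q * N σ (s c) r * N σ (s e) w := by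
  have h : ∀ t, N σ (s t) (m t) =
      (if t = a then N σ (s t) p else 1) * (if t = b then N σ (s t) q else 1)
        * (if t = c then N σ (s t) r else 1) * (if t = e then N σ (s t) w else 1) := by
    intro t; rw [hm t]
    by_cases h1 : t = a <;> by_cases h2 : t = b <;> by_cases h3 : t = c <;>
      by_cases h4 : t = e <;> simp_all [N_zero]
  rw [Finset.prod_congr rfl fun t _ => h t, Finset.prod_mul_distrib, Finset.prod_mul_distrib,
    Finset.prod_mul_distrib, Finset.prod_ite_eq' Finset.univ a, Finset.prod_ite_eq' Finset.univ b,
    Finset.prod_ite_eq' Finset.univ c, Finset.prod_ite_eq' Finset.univ e]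
  simp

end prodN

section eval
variable (σ : ℝ) (s : Fin d → ℝ)

lemma eval2 (i j : Fin d) : ∏ t, N σ (s t) (ee i t + ee j t) = s i * s j + σ^2 * dd i j := by
  by_cases hij : i = j
  · subst hij
    refine (prodN_one σ s i 2 (fun t => ee i t + ee i t)
      (fun t => by simp only [ee]; split_ifs <;> omega)).trans ?_
    simp [N_two, dd]
    try ring
  · refine (prodN_two σ s i j hij 1 1 (fun t => ee i t + ee j t) (fun t => rfl)).trans ?_
    simp [N_one, dd, hij]

lemma eval4 (i j k l : Fin d) :
    ∏ t, N σ (s t) (ee i t + ee j t + ee k t + ee l t)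
      = s i * s j * s k * s l
        + σ^2 * (dd i j * (s k * s l) + dd i k * (s j * s l) + dd i l * (s j * s k)
          + dd j k * (s i * s l) + dd j l * (s i * s k) + dd k l * (s i * s j))
        + σ^4 * (dd i j * dd k l + dd i k * dd j l + dd i l * dd j k) := by
  by_cases hij : i = j
  · subst hij
    by_cases hik : i = k
    · subst hik
      by_cases hil : i = l
      · subst hil
        refine (prodN_one σ s i 4 _ (fun t => by simp only [ee]; split_ifs <;> omega)).trans ?_
        simp [N_four, dd]
        try ring
      · refine (prodN_two σ s i l hil 3 1 _
          (fun t => by simp only [ee]; split_ifs <;> omega)).trans ?_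
        simp [N_three, N_one, dd, hil]; ring
    · by_cases hil : i = l
      · subst hil
        refine (prodN_two σ s i k hik 3 1 _
          (fun t => by simp only [ee]; split_ifs <;> omega)).trans ?_
        simp [N_three, N_one, dd, hik, Ne.symm hik]; ring
      · by_cases hkl : k = l
        · subst hkl
          refine (prodN_two σ s i k hik 2 2 _
            (fun t => by simp only [ee]; split_ifs <;> omega)).trans ?_
          simp [N_two, dd, hik]; ring
        · refine (prodN_three σ s i k l hik hil hkl 2 1 1 _
            (fun t => by simp only [ee]; split_ifs <;> omega)).trans ?_
          simp [N_two, N_one, dd, hik, hil, hkl]; ring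
  · by_cases hik : i = k
    · subst hik
      by_cases hjl : j = l
      · subst hjl
        refine (prodN_two σ s i j hij 2 2 _
          (fun t => by simp only [ee]; split_ifs <;> omega)).trans ?_
        simp [N_two, dd, hij, Ne.symm hij]; ring
      · by_cases hil : i = l
        · subst hil
          refine (prodN_two σ s i j hij 3 1 _
            (fun t => by simp only [ee]; split_ifs <;> omega)).trans ?_
          simp [N_three, N_one, dd, hij, hjl, Ne.symm hij]; ring
        · refine (prodN_three σ s i j l hij hil hjl 2 1 1 _
            (fun t => by simp only [ee]; split_ifs <;> omega)).trans ?_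
          simp [N_two, N_one, dd, hij, hil, hjl, Ne.symm hij]; ring
    · by_cases hil : i = l
      · subst hil
        by_cases hjk : j = k
        · subst hjk
          refine (prodN_two σ s i j hij 2 2 _
            (fun t => by simp only [ee]; split_ifs <;> omega)).trans ?_
          simp [N_two, dd, hij, Ne.symm hij]; ring
        · refine (prodN_three σ s i j k hij hik hjk 2 1 1 _
            (fun t => by simp only [ee]; split_ifs <;> omega)).trans ?_
          simp [N_two, N_one, dd, hij, hik, hjk, Ne.symm hij, Ne.symm hik, Ne.symm hjk]; ring
      · by_cases hjk : j = k
        · subst hjk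
          by_cases hjl : j = l
          · subst hjl
            refine (prodN_two σ s i j hij 1 3 _
              (fun t => by simp only [ee]; split_ifs <;> omega)).trans ?_
            simp [N_three, N_one, dd, hij, hil, Ne.symm hij]
            try ring
          · refine (prodN_three σ s i j l hij hil hjl 1 2 1 _
              (fun t => by simp only [ee]; split_ifs <;> omega)).trans ?_
            simp [N_two, N_one, dd, hij, hil, hjl, Ne.symm hij, Ne.symm hil, Ne.symm hjl]; ring
        · by_cases hjl : j = l
          · subst hjl
            refine (prodN_three σ s i j k hij hik hjk 1 2 1 _
              (fun t => by simp only [ee]; split_ifs <;> omega)).trans ?_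
            simp [N_two, N_one, dd, hij, hik, hjk, hil, Ne.symm hij, Ne.symm hik, Ne.symm hjk,
              Ne.symm hil]; ring
          · by_cases hkl : k = l
            · subst hkl
              refine (prodN_three σ s i j k hij hik hjk 1 1 2 _
                (fun t => by simp only [ee]; split_ifs <;> omega)).trans ?_
              simp [N_two, N_one, dd, hij, hik, hjk, hil, hjl, Ne.symm hij, Ne.symm hik,
                Ne.symm hjk, Ne.symm hil, Ne.symm hjl]; ring
            · refine (prodN_four σ s i j k l hij hik hil hjk hjl hkl 1 1 1 1 _
                (fun t => rfl)).trans ?_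
              simp [N_one, dd, hij, hik, hjk, hil, hjl, hkl, Ne.symm hij, Ne.symm hik,
                Ne.symm hjk, Ne.symm hil, Ne.symm hjl, Ne.symm hkl]
              try ring

end eval

section key
variable (σ : ℝ) (s : Fin d → ℝ)

lemma int2 (i j : Fin d) :
    Integrable (fun x : Fin d → ℝ => (s i + σ * x i) * (s j + σ * x j)) (GP d) := by
  have h : (fun x : Fin d → ℝ => (s i + σ * x i) * (s j + σ * x j))
      = fun x => ∏ t, (s t + σ * x t) ^ (ee i t + ee j t) := funext (two_prod s σ i j)
  rw [h]
  exact pi_integrable _ (fun t => intAff σ (s t) _)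

lemma int4 (i j k l : Fin d) :
    Integrable (fun x : Fin d → ℝ =>
      (s i + σ * x i) * (s j + σ * x j) * (s k + σ * x k) * (s l + σ * x l)) (GP d) := by
  have h : (fun x : Fin d → ℝ =>
      (s i + σ * x i) * (s j + σ * x j) * (s k + σ * x k) * (s l + σ * x l))
      = fun x => ∏ t, (s t + σ * x t) ^ (ee i t + ee j t + ee k t + ee l t) :=
    funext (four_prod s σ i j k l)
  rw [h]
  exact pi_integrable _ (fun t => intAff σ (s t) _)

lemma key2 (i j : Fin d) :
    ∫ x, (s i + σ * x i) * (s j + σ * x j) ∂(GP d) = s i * s j + σ^2 * dd i j := by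
  simp_rw [two_prod s σ i j]
  rw [pi_integral (fun t y => (s t + σ * y) ^ (ee i t + ee j t))]
  exact eval2 σ s i j

lemma key4 (i j k l : Fin d) :
    ∫ x, (s i + σ * x i) * (s j + σ * x j) * (s k + σ * x k) * (s l + σ * x l) ∂(GP d)
      = s i * s j * s k * s l
        + σ^2 * (dd i j * (s k * s l) + dd i k * (s j * s l) + dd i l * (s j * s k)
          + dd j k * (s i * s l) + dd j l * (s i * s k) + dd k l * (s i * s j))
        + σ^4 * (dd i j * dd k l + dd i k * dd j l + dd i l * dd j k) := by
  simp_rw [four_prod s σ i j k l]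
  rw [pi_integral (fun t y => (s t + σ * y) ^ (ee i t + ee j t + ee k t + ee l t))]
  exact eval4 σ s i j k l

end key


section sums
variable (σ : ℝ)

/-- closed form of the 4th moment -/
def E4f (σ : ℝ) (s : Fin d → ℝ) (a b c e : Fin d) : ℝ :=
  s a * s b * s c * s e
    + σ^2 * (dd a b * (s c * s e) + dd a c * (s b * s e) + dd a e * (s b * s c)
      + dd b c * (s a * s e) + dd b e * (s a * s c) + dd c e * (s a * s b))
    + σ^4 * (dd a b * dd c e + dd a c * dd b e + dd a e * dd b c)

lemma key4' (s : Fin d → ℝ) (i j k l : Fin d) :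
    ∫ x, (s i + σ * x i) * (s j + σ * x j) * (s k + σ * x k) * (s l + σ * x l) ∂(GP d)
      = E4f σ s i j k l := key4 σ s i j k l

def SPf (σ : ℝ) (v : Fin d → ℝ) (i j : Fin d) : ℝ := v i * v j + σ^2 * dd i j

lemma sumV (v : Fin d → ℝ) (hs : ∑ k, v k ^ 2 = 1) (i j : Fin d) :
    ∑ k, (E4f σ v i k j k - SPf σ v i k * SPf σ v j k)
      = ((d:ℝ)+2) * σ^2 * (v i * v j) + (σ^2 + ((d:ℝ)+1) * σ^4) * dd i j := by
  have hpt : ∀ k, E4f σ v i k j k - SPf σ v i k * SPf σ v j k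
      = σ^2*(v i*v j) + (σ^2*dd i j)*v k^2 + σ^4*dd i j
        + (if i = k then σ^2*(v k*v j) + (if k = j then σ^4 else 0) else 0)
        + (if k = j then σ^2*(v i*v k) else 0) := by
    intro k
    simp only [E4f, SPf, dd]
    split_ifs <;> first | ring | simp_all
  calc ∑ k, (E4f σ v i k j k - SPf σ v i k * SPf σ v j k)
      = ∑ k, (σ^2*(v i*v j) + (σ^2*dd i j)*v k^2 + σ^4*dd i j
        + (if i = k then σ^2*(v k*v j) + (if k = j then σ^4 else 0) else 0)
        + (if k = j then σ^2*(v i*v k) else 0)) := Finset.sum_congr rfl fun k _ => hpt k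
    _ = ((d:ℝ)+2) * σ^2 * (v i * v j) + (σ^2 + ((d:ℝ)+1) * σ^4) * dd i j := by
        rw [Finset.sum_add_distrib, Finset.sum_add_distrib, Finset.sum_add_distrib,
          Finset.sum_add_distrib, Finset.sum_const, ← Finset.mul_sum, hs, Finset.sum_const,
          Finset.sum_ite_eq, Finset.sum_ite_eq']
        simp only [Finset.mem_univ, if_true, Finset.card_univ, Fintype.card_fin, nsmul_eq_mul, dd]
        split_ifs <;> ring

lemma sumH (v u : Fin d → ℝ) (hs : ∑ k, u k ^ 2 = 1) (i j : Fin d) :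
    ∑ l, ∑ k, (u k * u l) * (E4f σ v i k j l - SPf σ v i k * SPf σ v j l)
      = σ^2 * (dd i j * (∑ k, u k * v k)^2 + (∑ k, u k * v k) * (v j * u i)
          + (∑ k, u k * v k) * (v i * u j) + v i * v j)
        + σ^4 * (dd i j + u i * u j) := by
  set c : ℝ := ∑ k, u k * v k with hc
  have hpt : ∀ l k, (u k * u l) * (E4f σ v i k j l - SPf σ v i k * SPf σ v j l)
      = (u k * v k) * ((σ^2*dd i j)*(u l*v l) + (σ^2*v j)*(if i = l then u l else 0))
        + (if k = j then u k else 0) * ((σ^2*v i)*(u l*v l) + σ^4*(if i = l then u l else 0))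
        + (if k = l then u k else 0) * ((σ^2*(v i*v j))*u l + (σ^4*dd i j)*u l) := by
    intro l k
    simp only [E4f, SPf, dd]
    split_ifs <;> first | ring | simp_all
  have hinner : ∀ l, ∑ k, (u k * u l) * (E4f σ v i k j l - SPf σ v i k * SPf σ v j l)
      = c * ((σ^2*dd i j)*(u l*v l) + (σ^2*v j)*(if i = l then u l else 0))
        + u j * ((σ^2*v i)*(u l*v l) + σ^4*(if i = l then u l else 0))
        + u l * ((σ^2*(v i*v j))*u l + (σ^4*dd i j)*u l) := by
    intro l
    calc ∑ k, (u k * u l) * (E4f σ v i k j l - SPf σ v i k * SPf σ v j l)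
        = ∑ k, ((u k * v k) * ((σ^2*dd i j)*(u l*v l) + (σ^2*v j)*(if i = l then u l else 0))
          + (if k = j then u k else 0) * ((σ^2*v i)*(u l*v l) + σ^4*(if i = l then u l else 0))
          + (if k = l then u k else 0) * ((σ^2*(v i*v j))*u l + (σ^4*dd i j)*u l)) :=
          Finset.sum_congr rfl fun k _ => hpt l k
      _ = _ := by
          rw [Finset.sum_add_distrib, Finset.sum_add_distrib, ← Finset.sum_mul, ← Finset.sum_mul,
            ← Finset.sum_mul, ← hc, Finset.sum_ite_eq', Finset.sum_ite_eq']
          simp only [Finset.mem_univ, if_true]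
  have h1 : ∑ l, (if i = l then u l else 0) = u i := by
    rw [Finset.sum_ite_eq]; simp
  calc ∑ l, ∑ k, (u k * u l) * (E4f σ v i k j l - SPf σ v i k * SPf σ v j l)
      = ∑ l, (c * ((σ^2*dd i j)*(u l*v l) + (σ^2*v j)*(if i = l then u l else 0))
        + u j * ((σ^2*v i)*(u l*v l) + σ^4*(if i = l then u l else 0))
        + u l * ((σ^2*(v i*v j))*u l + (σ^4*dd i j)*u l)) :=
        Finset.sum_congr rfl fun l _ => hinner l
    _ = c * ((σ^2*dd i j)*c + (σ^2*v j)*u i)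
        + u j * ((σ^2*v i)*c + σ^4*u i)
        + (σ^2*(v i*v j) + σ^4*dd i j) := by
        rw [Finset.sum_add_distrib, Finset.sum_add_distrib, ← Finset.mul_sum, ← Finset.mul_sum]
        congr 1
        · congr 1
          · congr 1
            rw [Finset.sum_add_distrib, ← Finset.mul_sum, ← Finset.mul_sum, ← hc, h1]
          · congr 1
            rw [Finset.sum_add_distrib, ← Finset.mul_sum, ← Finset.mul_sum, ← hc, h1]
        · calc ∑ l, u l * ((σ^2*(v i*v j))*u l + (σ^4*dd i j)*u l)
              = ∑ l, (σ^2*(v i*v j) + σ^4*dd i j) * u l ^ 2 :=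
              Finset.sum_congr rfl fun l _ => by ring
            _ = _ := by rw [← Finset.mul_sum, hs, mul_one]
    _ = _ := by ring

end sums

lemma iprod_eq (a b : Vec d) : iprod a b = ∑ i, a i * b i := by
  simp [iprod, PiLp.inner_apply, RCLike.inner_apply, conj_trivial]
  exact Finset.sum_congr rfl fun _ _ => mul_comm _ _

lemma mulVecE_apply (A : Mat d) (u : Vec d) (i : Fin d) :
    mulVecE A u i = ∑ j, A i j * u j := by
  rfl

lemma specNorm_add_le (A B : Mat d) : specNorm (A + B) ≤ specNorm A + specNorm B := by
  unfold specNorm; rw [map_add]; exact norm_add_le _ _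

lemma toCLM_smul (r : ℝ) (A : Mat d) : Matrix.toEuclideanCLM (𝕜 := ℝ) (r • A)
    = r • Matrix.toEuclideanCLM (𝕜 := ℝ) A := by
  refine ContinuousLinearMap.ext fun x => ?_
  ext i
  show ∑ j, (r • A) i j * x j = r * (∑ j, A i j * x j)
  rw [Finset.mul_sum]
  exact Finset.sum_congr rfl fun j _ => by simp [Matrix.smul_apply]; ring

lemma toCLM_one : Matrix.toEuclideanCLM (𝕜 := ℝ) (1 : Mat d)
    = ContinuousLinearMap.id ℝ (Vec d) := by
  refine ContinuousLinearMap.ext fun x => ?_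
  ext i
  show ∑ j, (1 : Mat d) i j * x j = x i
  simp [Matrix.one_apply, ite_mul]

lemma specNorm_smul_le (r : ℝ) (A : Mat d) : specNorm (r • A) ≤ |r| * specNorm A := by
  unfold specNorm
  rw [toCLM_smul]
  calc ‖r • Matrix.toEuclideanCLM (𝕜 := ℝ) A‖ ≤ ‖r‖ * ‖Matrix.toEuclideanCLM (𝕜 := ℝ) A‖ :=
        ContinuousLinearMap.opNorm_smul_le _ _
    _ = |r| * _ := by rw [Real.norm_eq_abs]

lemma specNorm_one_le : specNorm (1 : Mat d) ≤ 1 := by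
  unfold specNorm; rw [toCLM_one]
  exact ContinuousLinearMap.norm_id_le

lemma specNorm_outer_le (a b : Vec d) : specNorm (outer a b) ≤ ‖a‖ * ‖b‖ := by
  unfold specNorm
  refine ContinuousLinearMap.opNorm_le_bound _ (by positivity) fun x => ?_
  have hx : (Matrix.toEuclideanCLM (𝕜 := ℝ) (outer a b)) x = (iprod b x) • a := by
    ext i
    have h1 : (Matrix.toEuclideanCLM (𝕜 := ℝ) (outer a b)) x i
        = ∑ j, (outer a b) i j * x j := rfl
    rw [h1]
    have : ∀ j, (outer a b) i j * x j = a i * (b j * x j) := by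
      intro j; simp [outer, Matrix.vecMulVec_apply, toVec']; ring
    rw [Finset.sum_congr rfl fun j _ => this j, ← Finset.mul_sum]
    show a i * _ = (iprod b x) * a i
    rw [iprod_eq]; ring
  rw [hx, norm_smul, Real.norm_eq_abs]
  have := abs_real_inner_le_norm b x
  have h2 : |iprod b x| ≤ ‖b‖ * ‖x‖ := by rw [iprod]; exact this
  calc |iprod b x| * ‖a‖ ≤ (‖b‖ * ‖x‖) * ‖a‖ := by
        exact mul_le_mul_of_nonneg_right h2 (norm_nonneg _)
    _ = ‖a‖ * ‖b‖ * ‖x‖ := by ring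


end S17
end

/-- Example 4.1: signal–noise separation; the model parameters are
V = O(dσ²) and γ² = O(σ²). -/
theorem statement_17 :
    ∃ C : ℝ, 0 < C ∧
      ∀ (d : ℕ) (v : Vec d) (σ : ℝ), 1 ≤ d → ‖v‖ = 1 → σ ∈ Set.Ioc (0 : ℝ) 1 →
        (let noise : Measure (Vec d) := (stdGaussianE d).map fun x => σ • x
         let P : Measure (Vec d) :=
           (2 : ℝ≥0∞)⁻¹ • (noise.map fun x => v + x) +
             (2 : ℝ≥0∞)⁻¹ • (noise.map fun x => -v + x)
         let SP : Mat d := outer v v + σ ^ 2 • (1 : Mat d)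
         -- covariance Σ = v vᵀ + σ² I with its spectral structure
         covMatrix P = SP ∧
           mulVecE SP v = (1 + σ ^ 2) • v ∧
           (∀ u : Vec d, iprod u v = 0 → mulVecE SP u = σ ^ 2 • u) ∧
           -- V = O(dσ²)
           specNorm (matExp P fun x => (outer x x - SP) * (outer x x - SP)ᵀ) ≤
             C * d * σ ^ 2 ∧
           -- γ² = O(σ²)
           ∀ u : Vec d, ‖u‖ = 1 →
             specNorm (matExp P fun x =>
               (outer x x - SP) * outer u u * (outer x x - SP)ᵀ) ≤ C * σ ^ 2) := by
  classical
  refine ⟨6, by norm_num, ?_⟩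
  intro d v σ hd hv hσ
  intro noise P SP
  obtain ⟨hσ0, hσ1⟩ := hσ
  -- basic numeric facts
  have hd1 : (1:ℝ) ≤ (d:ℝ) := by exact_mod_cast hd
  have hσ2le : σ^2 ≤ 1 := by nlinarith
  have hσ4le : σ^4 ≤ σ^2 := by nlinarith
  -- norm of v as a sum
  have hvsum : ∑ i, v i ^ 2 = 1 := by
    have h2 : ‖v‖^2 = ∑ i, v i^2 := by
      rw [EuclideanSpace.norm_eq, Real.sq_sqrt (by positivity)]
      exact Finset.sum_congr rfl fun i _ => by rw [Real.norm_eq_abs, sq_abs]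
    rw [hv] at h2; rw [← h2]; norm_num
  have hvsum' : ∑ k, v k * v k = 1 := by
    refine (Finset.sum_congr rfl fun k _ => ?_).trans hvsum
    rw [sq]
  -- the maps
  set em : (Fin d → ℝ) → Vec d := fun x => (EuclideanSpace.equiv (Fin d) ℝ).symm x with hemdef
  have hem : Measurable em := (EuclideanSpace.equiv (Fin d) ℝ).symm.continuous.measurable
  set Tp : (Fin d → ℝ) → Vec d := fun x => v + σ • em x with hTpdef
  set Tm : (Fin d → ℝ) → Vec d := fun x => -v + σ • em x with hTmdef
  have hsmm : Measurable fun y : Vec d => σ • y := (continuous_const_smul σ).measurable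
  have haddp : Measurable fun y : Vec d => v + y := (continuous_const.add continuous_id).measurable
  have haddm : Measurable fun y : Vec d => -v + y := (continuous_const.add continuous_id).measurable
  have hTp : Measurable Tp := haddp.comp (hsmm.comp hem)
  have hTm : Measurable Tm := haddm.comp (hsmm.comp hem)
  have hP : P = (2:ℝ≥0∞)⁻¹ • (S17.GP d).map Tp + (2:ℝ≥0∞)⁻¹ • (S17.GP d).map Tm := by
    show (2:ℝ≥0∞)⁻¹ • (noise.map fun x => v + x) + (2:ℝ≥0∞)⁻¹ • (noise.map fun x => -v + x) = _
    have hn : noise = (S17.GP d).map (fun x => σ • em x) := by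
      show (stdGaussianE d).map (fun x => σ • x) = _
      rw [stdGaussianE, Measure.map_map hsmm hem]
      rfl
    have hsem : Measurable fun x : Fin d → ℝ => σ • em x := hsmm.comp hem
    rw [hn, Measure.map_map haddp hsem, Measure.map_map haddm hsem]
    rfl
  have hprob : IsProbabilityMeasure P := by
    constructor
    rw [hP]
    simp only [Measure.coe_add, Measure.coe_smul, Pi.add_apply, Pi.smul_apply, smul_eq_mul]
    rw [Measure.map_apply hTp MeasurableSet.univ, Measure.map_apply hTm MeasurableSet.univ]
    simp [Set.preimage_univ]
    exact ENNReal.inv_two_add_inv_two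
  -- reduction of integrals over P
  have hred : ∀ g : Vec d → ℝ, Measurable g →
      Integrable (fun x => g (Tp x)) (S17.GP d) → Integrable (fun x => g (Tm x)) (S17.GP d) →
      Integrable g P ∧ ∫ x, g x ∂P
        = 2⁻¹ * ∫ x, g (Tp x) ∂(S17.GP d) + 2⁻¹ * ∫ x, g (Tm x) ∂(S17.GP d) := by
    intro g hg h1 h2
    have e1 : Integrable g ((S17.GP d).map Tp) :=
      (integrable_map_measure hg.aestronglyMeasurable hTp.aemeasurable).mpr h1
    have e2 : Integrable g ((S17.GP d).map Tm) :=
      (integrable_map_measure hg.aestronglyMeasurable hTm.aemeasurable).mpr h2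
    have i1 : Integrable g ((2:ℝ≥0∞)⁻¹ • (S17.GP d).map Tp) :=
      (integrable_smul_measure (by norm_num) (by norm_num)).mpr e1
    have i2 : Integrable g ((2:ℝ≥0∞)⁻¹ • (S17.GP d).map Tm) :=
      (integrable_smul_measure (by norm_num) (by norm_num)).mpr e2
    constructor
    · rw [hP]; exact i1.add_measure i2
    · rw [hP, integral_add_measure i1 i2, integral_smul_measure, integral_smul_measure,
        integral_map hTp.aemeasurable hg.aestronglyMeasurable,
        integral_map hTm.aemeasurable hg.aestronglyMeasurable]
      norm_num [ENNReal.toReal_inv]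
  -- coordinate measurability
  have hco : ∀ i, Measurable fun x : Vec d => x i := by
    intro i
    have h : (fun x : Vec d => x i)
        = (fun y : Fin d → ℝ => y i) ∘ (EuclideanSpace.equiv (Fin d) ℝ) := rfl
    rw [h]
    exact (measurable_pi_apply i).comp (EuclideanSpace.equiv (Fin d) ℝ).continuous.measurable
  -- second moments of P
  have hP2 : ∀ i j, Integrable (fun x : Vec d => x i * x j) P ∧
      ∫ x, x i * x j ∂P = S17.SPf σ (toVec' v) i j := by
    intro i j
    have hg : Measurable fun x : Vec d => x i * x j := (hco i).mul (hco j)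
    have hip : Integrable (fun x : Fin d → ℝ =>
        (toVec' v i + σ * x i) * (toVec' v j + σ * x j)) (S17.GP d) := S17.int2 σ (toVec' v) i j
    have him : Integrable (fun x : Fin d → ℝ =>
        (toVec' (-v) i + σ * x i) * (toVec' (-v) j + σ * x j)) (S17.GP d) :=
      S17.int2 σ (toVec' (-v)) i j
    obtain ⟨hi, he⟩ := hred (fun y : Vec d => y i * y j) hg hip him
    refine ⟨hi, ?_⟩
    calc ∫ x, x i * x j ∂P
        = 2⁻¹ * (∫ x, (toVec' v i + σ * x i) * (toVec' v j + σ * x j) ∂(S17.GP d))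
          + 2⁻¹ * (∫ x, (toVec' (-v) i + σ * x i) * (toVec' (-v) j + σ * x j) ∂(S17.GP d)) := he
      _ = S17.SPf σ (toVec' v) i j := by
          rw [S17.key2 σ (toVec' v) i j, S17.key2 σ (toVec' (-v)) i j]
          have hm : ∀ t, toVec' (-v) t = -(toVec' v t) := fun t => rfl
          rw [hm i, hm j]
          simp only [S17.SPf]
          ring
  -- fourth moments of P
  have hP4 : ∀ i j k l, Integrable (fun x : Vec d => x i * x j * x k * x l) P ∧
      ∫ x, x i * x j * x k * x l ∂P = S17.E4f σ (toVec' v) i j k l := by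
    intro i j k l
    have hg : Measurable fun x : Vec d => x i * x j * x k * x l :=
      (((hco i).mul (hco j)).mul (hco k)).mul (hco l)
    have hip : Integrable (fun x : Fin d → ℝ => (toVec' v i + σ * x i) * (toVec' v j + σ * x j)
        * (toVec' v k + σ * x k) * (toVec' v l + σ * x l)) (S17.GP d) :=
      S17.int4 σ (toVec' v) i j k l
    have him : Integrable (fun x : Fin d → ℝ =>
        (toVec' (-v) i + σ * x i) * (toVec' (-v) j + σ * x j)
        * (toVec' (-v) k + σ * x k) * (toVec' (-v) l + σ * x l)) (S17.GP d) :=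
      S17.int4 σ (toVec' (-v)) i j k l
    obtain ⟨hi, he⟩ := hred (fun y : Vec d => y i * y j * y k * y l) hg hip him
    refine ⟨hi, ?_⟩
    calc ∫ x, x i * x j * x k * x l ∂P
        = 2⁻¹ * (∫ x, (toVec' v i + σ * x i) * (toVec' v j + σ * x j)
            * (toVec' v k + σ * x k) * (toVec' v l + σ * x l) ∂(S17.GP d))
          + 2⁻¹ * (∫ x, (toVec' (-v) i + σ * x i) * (toVec' (-v) j + σ * x j)
            * (toVec' (-v) k + σ * x k) * (toVec' (-v) l + σ * x l) ∂(S17.GP d)) := he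
      _ = S17.E4f σ (toVec' v) i j k l := by
          rw [S17.key4' σ (toVec' v) i j k l, S17.key4' σ (toVec' (-v)) i j k l]
          have hm : ∀ t, toVec' (-v) t = -(toVec' v t) := fun t => rfl
          simp only [S17.E4f, hm]
          ring
  -- SP entries
  have hSP : ∀ i j, SP i j = S17.SPf σ (toVec' v) i j := by
    intro i j
    show (outer v v + σ^2 • (1 : Mat d)) i j = _
    simp only [Matrix.add_apply, Matrix.smul_apply, Matrix.one_apply, outer,
      Matrix.vecMulVec_apply, S17.SPf, S17.dd, smul_eq_mul, mul_ite, mul_one, mul_zero]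
  -- the generic term lemma
  have hterm : ∀ (a b : ℝ) (i k j l : Fin d),
      Integrable (fun x : Vec d => (x i * x k - a) * (x j * x l - b)) P ∧
      ∫ x, (x i * x k - a) * (x j * x l - b) ∂P
        = S17.E4f σ (toVec' v) i k j l - b * S17.SPf σ (toVec' v) i k
          - a * S17.SPf σ (toVec' v) j l + a * b := by
    intro a b i k j l
    have hfe : (fun x : Vec d => (x i * x k - a) * (x j * x l - b))
        = fun x => x i * x k * x j * x l - b * (x i * x k) - a * (x j * x l) + a * b :=
      funext fun x => by ring
    have I4 := (hP4 i k j l).1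
    have I2a := (hP2 i k).1
    have I2b := (hP2 j l).1
    have hint : Integrable (fun x : Vec d =>
        x i * x k * x j * x l - b * (x i * x k) - a * (x j * x l) + a * b) P :=
      ((I4.sub (I2a.const_mul b)).sub (I2b.const_mul a)).add (integrable_const _)
    have IA : Integrable (fun x : Vec d => x i * x k * x j * x l - b * (x i * x k)) P :=
      I4.sub (I2a.const_mul b)
    have IB : Integrable (fun x : Vec d =>
        x i * x k * x j * x l - b * (x i * x k) - a * (x j * x l)) P :=
      IA.sub (I2b.const_mul a)
    constructor
    · rw [hfe]; exact hint
    · rw [hfe, integral_add IB (integrable_const _),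
        integral_sub IA (I2b.const_mul a),
        integral_sub I4 (I2a.const_mul b), integral_const_mul, integral_const_mul,
        integral_const, (hP4 i k j l).2, (hP2 i k).2, (hP2 j l).2]
      simp [measure_univ]
      try ring
  -- ===== conjunct 1 : covariance =====
  refine ⟨?_, ?_, ?_, ?_, ?_⟩
  · ext i j
    show (∫ x, toVec' x i * toVec' x j ∂P) = SP i j
    rw [hSP i j]
    exact (hP2 i j).2
  -- ===== conjunct 2 : top eigenvector =====
  · ext i
    show (∑ j, SP i j * v j) = (1 + σ^2) * v i
    have hterm2 : ∀ jj, SP i jj * v jj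
        = v i * (v jj * v jj) + σ^2 * (if i = jj then v jj else 0) := by
      intro jj
      rw [hSP]
      simp only [S17.SPf, S17.dd, toVec']
      split_ifs <;> ring
    rw [Finset.sum_congr rfl (fun jj _ => hterm2 jj), Finset.sum_add_distrib, ← Finset.mul_sum,
      ← Finset.mul_sum, hvsum', Finset.sum_ite_eq]
    simp
    ring
  -- ===== conjunct 3 : orthogonal eigenvectors =====
  · intro u hu
    have hortho : ∑ jj, v jj * u jj = 0 := by
      have h1 : iprod u v = ∑ t, u t * v t := S17.iprod_eq u v
      rw [hu] at h1
      rw [Finset.sum_congr rfl fun jj _ => mul_comm (v jj) (u jj)]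
      linarith [h1]
    ext i
    show (∑ j, SP i j * u j) = σ^2 * u i
    have hterm2 : ∀ jj, SP i jj * u jj
        = v i * (v jj * u jj) + σ^2 * (if i = jj then u jj else 0) := by
      intro jj
      rw [hSP]
      simp only [S17.SPf, S17.dd, toVec']
      split_ifs <;> ring
    rw [Finset.sum_congr rfl (fun jj _ => hterm2 jj), Finset.sum_add_distrib, ← Finset.mul_sum,
      ← Finset.mul_sum, hortho, Finset.sum_ite_eq]
    simp
  -- ===== conjunct 4 : V bound =====
  · have hEV : matExp P (fun x => (outer x x - SP) * (outer x x - SP)ᵀ)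
        = (((d:ℝ)+2) * σ^2) • outer v v + (σ^2 + ((d:ℝ)+1) * σ^4) • (1 : Mat d) := by
      ext i j
      show (∫ x, ((outer x x - SP) * (outer x x - SP)ᵀ) i j ∂P) = _
      have hent : ∀ x : Vec d, ((outer x x - SP) * (outer x x - SP)ᵀ) i j
          = ∑ k, ((x i * x k - S17.SPf σ (toVec' v) i k)
            * (x j * x k - S17.SPf σ (toVec' v) j k)) := by
        intro x
        rw [Matrix.mul_apply]
        refine Finset.sum_congr rfl fun k _ => ?_
        rw [Matrix.transpose_apply, Matrix.sub_apply, Matrix.sub_apply, hSP i k, hSP j k]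
        rfl
      rw [show (fun x : Vec d => ((outer x x - SP) * (outer x x - SP)ᵀ) i j)
        = fun x => ∑ k, ((x i * x k - S17.SPf σ (toVec' v) i k)
          * (x j * x k - S17.SPf σ (toVec' v) j k)) from funext hent]
      rw [integral_finset_sum _ fun k _ =>
        (hterm (S17.SPf σ (toVec' v) i k) (S17.SPf σ (toVec' v) j k) i k j k).1]
      have hval : ∀ k, ∫ x, ((x i * x k - S17.SPf σ (toVec' v) i k)
          * (x j * x k - S17.SPf σ (toVec' v) j k)) ∂P
          = S17.E4f σ (toVec' v) i k j k - S17.SPf σ (toVec' v) i k * S17.SPf σ (toVec' v) j k :=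
        fun k => ((hterm _ _ i k j k).2).trans (by ring)
      have hsv : ∑ k, (toVec' v) k ^ 2 = 1 := hvsum
      rw [Finset.sum_congr rfl (fun k _ => hval k), S17.sumV σ (toVec' v) hsv i j]
      show _ = (((d:ℝ)+2) * σ^2) * (toVec' v i * toVec' v j)
        + (σ^2 + ((d:ℝ)+1) * σ^4) * (if i = j then 1 else 0)
      simp only [S17.dd, toVec']
      try ring
    rw [hEV]
    have b1 : specNorm ((((d:ℝ)+2) * σ^2) • outer v v + (σ^2 + ((d:ℝ)+1) * σ^4) • (1 : Mat d))
        ≤ |((d:ℝ)+2) * σ^2| * specNorm (outer v v)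
          + |σ^2 + ((d:ℝ)+1) * σ^4| * specNorm (1 : Mat d) :=
      le_trans (S17.specNorm_add_le _ _) (add_le_add (S17.specNorm_smul_le _ _) (S17.specNorm_smul_le _ _))
    have b2 : specNorm (outer v v) ≤ 1 := by
      have := S17.specNorm_outer_le v v
      rw [hv] at this; simpa using this
    have b3 : specNorm (1 : Mat d) ≤ 1 := S17.specNorm_one_le
    have h0a : (0:ℝ) ≤ ((d:ℝ)+2) * σ^2 := by positivity
    have h0b : (0:ℝ) ≤ σ^2 + ((d:ℝ)+1) * σ^4 := by positivity
    have hs0 : 0 ≤ specNorm (outer v v) := norm_nonneg _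
    have hs1 : 0 ≤ specNorm (1 : Mat d) := norm_nonneg _
    calc specNorm ((((d:ℝ)+2) * σ^2) • outer v v + (σ^2 + ((d:ℝ)+1) * σ^4) • (1 : Mat d))
        ≤ |((d:ℝ)+2) * σ^2| * specNorm (outer v v)
          + |σ^2 + ((d:ℝ)+1) * σ^4| * specNorm (1 : Mat d) := b1
      _ ≤ (((d:ℝ)+2) * σ^2) * 1 + (σ^2 + ((d:ℝ)+1) * σ^4) * 1 := by
          rw [abs_of_nonneg h0a, abs_of_nonneg h0b]
          exact add_le_add (mul_le_mul_of_nonneg_left b2 h0a) (mul_le_mul_of_nonneg_left b3 h0b)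
      _ ≤ 6 * (d:ℝ) * σ^2 := by
          have hh1 : ((d:ℝ)+1) * σ^4 ≤ ((d:ℝ)+1) * σ^2 :=
            mul_le_mul_of_nonneg_left hσ4le (by positivity)
          have hh2 : 1 * σ^2 ≤ (d:ℝ) * σ^2 := mul_le_mul_of_nonneg_right hd1 (sq_nonneg σ)
          nlinarith [hh1, hh2]
  -- ===== conjunct 5 : gamma bound =====
  · intro u hu
    have husum : ∑ k, u k ^ 2 = 1 := by
      have h2 : ‖u‖^2 = ∑ i, u i^2 := by
        rw [EuclideanSpace.norm_eq, Real.sq_sqrt (by positivity)]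
        exact Finset.sum_congr rfl fun i _ => by rw [Real.norm_eq_abs, sq_abs]
      rw [hu] at h2; rw [← h2]; norm_num
    set c : ℝ := ∑ k, toVec' u k * toVec' v k with hcdef
    have hcabs : |c| ≤ 1 := by
      have h1 : c = iprod u v := (S17.iprod_eq u v).symm
      rw [h1, iprod]
      have := abs_real_inner_le_norm u v
      rwa [hu, hv, one_mul] at this
    have hEH : matExp P (fun x => (outer x x - SP) * outer u u * (outer x x - SP)ᵀ)
        = (σ^2 * c^2 + σ^4) • (1 : Mat d) + (σ^2 * c) • outer u v + (σ^2 * c) • outer v u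
          + σ^2 • outer v v + σ^4 • outer u u := by
      ext i j
      show (∫ x, ((outer x x - SP) * outer u u * (outer x x - SP)ᵀ) i j ∂P) = _
      have hent : ∀ x : Vec d, ((outer x x - SP) * outer u u * (outer x x - SP)ᵀ) i j
          = ∑ l, ∑ k, (toVec' u k * toVec' u l)
            * ((x i * x k - S17.SPf σ (toVec' v) i k)
              * (x j * x l - S17.SPf σ (toVec' v) j l)) := by
        intro x
        rw [Matrix.mul_apply]
        refine Finset.sum_congr rfl fun l _ => ?_
        rw [Matrix.mul_apply, Finset.sum_mul]
        refine Finset.sum_congr rfl fun k _ => ?_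
        rw [Matrix.transpose_apply, Matrix.sub_apply, Matrix.sub_apply, hSP i k, hSP j l]
        show (x i * x k - _) * (toVec' u k * toVec' u l) * (x j * x l - _) = _
        ring
      rw [show (fun x : Vec d => ((outer x x - SP) * outer u u * (outer x x - SP)ᵀ) i j)
        = fun x => ∑ l, ∑ k, (toVec' u k * toVec' u l)
          * ((x i * x k - S17.SPf σ (toVec' v) i k)
            * (x j * x l - S17.SPf σ (toVec' v) j l)) from funext hent]
      have hik_int : ∀ l k, Integrable (fun x : Vec d => (toVec' u k * toVec' u l)
          * ((x i * x k - S17.SPf σ (toVec' v) i k)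
            * (x j * x l - S17.SPf σ (toVec' v) j l))) P :=
        fun l k => ((hterm _ _ i k j l).1).const_mul _
      rw [integral_finset_sum _ fun l _ => integrable_finset_sum _ fun k _ => hik_int l k]
      have hinner : ∀ l, ∫ x, (∑ k, (toVec' u k * toVec' u l)
          * ((x i * x k - S17.SPf σ (toVec' v) i k)
            * (x j * x l - S17.SPf σ (toVec' v) j l))) ∂P
          = ∑ k, (toVec' u k * toVec' u l)
            * (S17.E4f σ (toVec' v) i k j l
              - S17.SPf σ (toVec' v) i k * S17.SPf σ (toVec' v) j l) := by
        intro l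
        rw [integral_finset_sum _ fun k _ => hik_int l k]
        refine Finset.sum_congr rfl fun k _ => ?_
        rw [integral_const_mul, (hterm _ _ i k j l).2]
        ring
      have hsu : ∑ k, (toVec' u) k ^ 2 = 1 := husum
      rw [Finset.sum_congr rfl (fun l _ => hinner l), S17.sumH σ (toVec' v) (toVec' u) hsu i j]
      show _ = (σ^2 * c^2 + σ^4) * (if i = j then 1 else 0) + (σ^2 * c) * (toVec' u i * toVec' v j)
        + (σ^2 * c) * (toVec' v i * toVec' u j) + σ^2 * (toVec' v i * toVec' v j)
        + σ^4 * (toVec' u i * toVec' u j)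
      rw [← hcdef]
      simp only [S17.dd, toVec']
      ring
    rw [hEH]
    have hb : ∀ (r : ℝ) (a b : Vec d), ‖a‖ = 1 → ‖b‖ = 1 →
        specNorm (r • outer a b) ≤ |r| := by
      intro r a b ha hb
      calc specNorm (r • outer a b) ≤ |r| * specNorm (outer a b) := S17.specNorm_smul_le _ _
        _ ≤ |r| * 1 := by
            refine mul_le_mul_of_nonneg_left ?_ (abs_nonneg _)
            have := S17.specNorm_outer_le a b
            rw [ha, hb] at this; simpa using this
        _ = |r| := mul_one _
    have h1 : specNorm ((σ^2 * c^2 + σ^4) • (1 : Mat d)) ≤ σ^2 * c^2 + σ^4 := by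
      calc specNorm ((σ^2 * c^2 + σ^4) • (1 : Mat d))
          ≤ |σ^2 * c^2 + σ^4| * specNorm (1 : Mat d) := S17.specNorm_smul_le _ _
        _ ≤ |σ^2 * c^2 + σ^4| * 1 := mul_le_mul_of_nonneg_left S17.specNorm_one_le (abs_nonneg _)
        _ = σ^2 * c^2 + σ^4 := by rw [mul_one, abs_of_nonneg (by positivity)]
    have h2 : specNorm ((σ^2 * c) • outer u v) ≤ σ^2 * |c| := by
      refine le_trans (hb _ u v hu hv) ?_
      rw [abs_mul, abs_of_nonneg (sq_nonneg σ)]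
    have h3 : specNorm ((σ^2 * c) • outer v u) ≤ σ^2 * |c| := by
      refine le_trans (hb _ v u hv hu) ?_
      rw [abs_mul, abs_of_nonneg (sq_nonneg σ)]
    have h4 : specNorm (σ^2 • outer v v) ≤ σ^2 := by
      refine le_trans (hb _ v v hv hv) ?_
      rw [abs_of_nonneg (sq_nonneg σ)]
    have h5 : specNorm (σ^4 • outer u u) ≤ σ^4 := by
      refine le_trans (hb _ u u hu hu) ?_
      rw [abs_of_nonneg (by positivity)]
    have hc2 : c^2 ≤ 1 := by nlinarith [abs_nonneg c, sq_abs c]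
    calc specNorm ((σ^2 * c^2 + σ^4) • (1 : Mat d) + (σ^2 * c) • outer u v
          + (σ^2 * c) • outer v u + σ^2 • outer v v + σ^4 • outer u u)
        ≤ specNorm ((σ^2 * c^2 + σ^4) • (1 : Mat d) + (σ^2 * c) • outer u v
            + (σ^2 * c) • outer v u + σ^2 • outer v v) + specNorm (σ^4 • outer u u) :=
          S17.specNorm_add_le _ _
      _ ≤ (specNorm ((σ^2 * c^2 + σ^4) • (1 : Mat d) + (σ^2 * c) • outer u v
            + (σ^2 * c) • outer v u) + specNorm (σ^2 • outer v v)) + specNorm (σ^4 • outer u u) :=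
          add_le_add_left (S17.specNorm_add_le _ _) _
      _ ≤ ((specNorm ((σ^2 * c^2 + σ^4) • (1 : Mat d) + (σ^2 * c) • outer u v)
            + specNorm ((σ^2 * c) • outer v u)) + specNorm (σ^2 • outer v v))
            + specNorm (σ^4 • outer u u) :=
          add_le_add_left (add_le_add_left (S17.specNorm_add_le _ _) _) _
      _ ≤ (((specNorm ((σ^2 * c^2 + σ^4) • (1 : Mat d)) + specNorm ((σ^2 * c) • outer u v))
            + specNorm ((σ^2 * c) • outer v u)) + specNorm (σ^2 • outer v v))
            + specNorm (σ^4 • outer u u) :=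
          add_le_add_left (add_le_add_left (add_le_add_left (S17.specNorm_add_le _ _) _) _) _
      _ ≤ (((σ^2 * c^2 + σ^4) + σ^2 * |c|) + σ^2 * |c| + σ^2) + σ^4 :=
          add_le_add (add_le_add (add_le_add (add_le_add h1 h2) h3) h4) h5
      _ ≤ 6 * σ^2 := by nlinarith [abs_nonneg c, sq_nonneg σ,
          mul_le_mul_of_nonneg_left hcabs (sq_nonneg σ), mul_le_mul_of_nonneg_left hc2 (sq_nonneg σ)]
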